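/- Let φ ∈ (ℂ^D)^{⊗n} be a 1-uniform (critical) state of unit norm, n even, with φ_i = ⟨i|₁φ. If U = U₁⊗⋯⊗U_n with U_i ∈ SU(D) and ψ = e^{it}·U·φ for some t ∈ ℝ, then the spans C = span{⟨i|₁φ} and C' = span{⟨i|₁ψ} satisfy C' = (U₂⊗⋯⊗U_n)·C... conversely, if span{⟨i|₁φ} = Ũ·span{⟨i|₁ψ} for some local unitary Ũ on the last n−1 factors, then φ = (U₀ ⊗ Ũ)ψ for some U₀ ∈ U(D) acting on the first factor. -/

import Mathlib

open Matrix Complex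
open scoped BigOperators
noncomputable section

/-- Reduced density matrix of `ψ` on the sites in `S` (up to a uniform positive factor). -/
def red {n D : ℕ} (ψ : (Fin n → Fin D) → ℂ) (S : Finset (Fin n)) (a b : Fin n → Fin D) : ℂ :=
  ∑ f : Fin n → Fin D,
    ψ (fun i => if i ∈ S then a i else f i) *
      (starRingEnd ℂ) (ψ (fun i => if i ∈ S then b i else f i))

/-- The reduction of `ψ` to the sites in `S` is proportional to the identity. -/
def UniformOn {n D : ℕ} (ψ : (Fin n → Fin D) → ℂ) (S : Finset (Fin n)) : Prop :=
  ∃ c : ℂ, ∀ a b, red ψ S a b = if (∀ i ∈ S, a i = b i) then c else 0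

/-- `ψ` is `r`-uniform. -/
def IsUniform {n D : ℕ} (r : ℕ) (ψ : (Fin n → Fin D) → ℂ) : Prop :=
  ∀ S : Finset (Fin n), S.card = r → UniformOn ψ S

/-- The local operator `g₁ ⊗ ⋯ ⊗ g_n` on `(ℂ^D)^{⊗n}`. -/
def bigOp {n D : ℕ} (gs : Fin n → Matrix (Fin D) (Fin D) ℂ) :
    Matrix (Fin n → Fin D) (Fin n → Fin D) ℂ :=
  Matrix.of fun f g => ∏ k : Fin n, gs k (f k) (g k)

/-- The contraction `⟨i|₁φ` of `φ ∈ (ℂ^D)^{⊗(n+1)}` with `⟨i|` in the first factor. -/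
def cont {n D : ℕ} (φ : (Fin (n + 1) → Fin D) → ℂ) (i : Fin D) : (Fin n → Fin D) → ℂ :=
  fun f => φ (Fin.cons i f)

namespace S19
variable {n D : ℕ}

def ip {α : Type*} [Fintype α] (v w : α → ℂ) : ℂ := ∑ g, (starRingEnd ℂ) (v g) * w g

lemma bigOp_mul (A B : Fin n → Matrix (Fin D) (Fin D) ℂ) :
    bigOp A * bigOp B = bigOp fun k => A k * B k := by
  ext f g
  show ∑ h : Fin n → Fin D, (∏ k, A k (f k) (h k)) * ∏ k, B k (h k) (g k)
      = ∏ k, (A k * B k) (f k) (g k)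
  simp_rw [Matrix.mul_apply]
  rw [Fintype.prod_sum (fun k j => A k (f k) j * B k j (g k))]
  exact Finset.sum_congr rfl fun h _ => (Finset.prod_mul_distrib).symm

lemma bigOp_conjT (A : Fin n → Matrix (Fin D) (Fin D) ℂ) :
    (bigOp A)ᴴ = bigOp fun k => (A k)ᴴ := by
  ext f g
  show (starRingEnd ℂ) (∏ k, A k (g k) (f k)) = ∏ k, (A k)ᴴ (f k) (g k)
  rw [map_prod]
  exact Finset.prod_congr rfl fun k _ => rfl

lemma bigOp_one : bigOp (fun _ : Fin n => (1 : Matrix (Fin D) (Fin D) ℂ)) = 1 := by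
  ext f g
  show (∏ k, (1 : Matrix (Fin D) (Fin D) ℂ) (f k) (g k)) = (1 : Matrix _ _ ℂ) f g
  simp only [Matrix.one_apply]
  rw [Fintype.prod_boole]
  simp [funext_iff]

lemma bigOp_unitary {A : Fin n → Matrix (Fin D) (Fin D) ℂ} (h : ∀ k, (A k)ᴴ * A k = 1) :
    (bigOp A)ᴴ * bigOp A = 1 := by
  rw [bigOp_conjT, bigOp_mul]
  have : (fun k => (A k)ᴴ * A k) = fun _ => (1 : Matrix (Fin D) (Fin D) ℂ) := funext h
  rw [this, bigOp_one]

lemma ip_eq_dot {α : Type*} [Fintype α] (v w : α → ℂ) : ip v w = star v ⬝ᵥ w := rfl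

lemma ip_mulVec {α : Type*} [Fintype α] [DecidableEq α] {M : Matrix α α ℂ} (hM : Mᴴ * M = 1)
    (v w : α → ℂ) : ip (M.mulVec v) (M.mulVec w) = ip v w := by
  rw [ip_eq_dot, ip_eq_dot, Matrix.star_mulVec, Matrix.dotProduct_mulVec,
    Matrix.vecMul_vecMul, hM, Matrix.vecMul_one]

lemma ip_conj {α : Type*} [Fintype α] (v w : α → ℂ) :
    (starRingEnd ℂ) (ip v w) = ip w v := by
  simp [ip, mul_comm]

lemma ip_sum_smul_right {α β : Type*} [Fintype α] [Fintype β] (u : α → ℂ) (c : β → ℂ)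
    (e : β → α → ℂ) : ip u (∑ k, c k • e k) = ∑ k, c k * ip u (e k) := by
  simp only [ip, Finset.sum_apply, Pi.smul_apply, smul_eq_mul, Finset.mul_sum]
  rw [Finset.sum_comm]
  exact Finset.sum_congr rfl fun k _ => by
    exact Finset.sum_congr rfl fun g _ => by ring

lemma ip_sum_smul_left {α β : Type*} [Fintype α] [Fintype β] (u : α → ℂ) (c : β → ℂ)
    (e : β → α → ℂ) : ip (∑ k, c k • e k) u = ∑ k, (starRingEnd ℂ) (c k) * ip (e k) u := by
  rw [← ip_conj, ip_sum_smul_right, map_sum]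
  exact Finset.sum_congr rfl fun k _ => by rw [_root_.map_mul, ip_conj]

lemma sum_split {α : Type*} [AddCommMonoid α] (F : (Fin (n+1) → Fin D) → α) :
    ∑ f, F f = ∑ j : Fin D, ∑ h : Fin n → Fin D, F (Fin.cons j h) := by
  rw [← (Fin.consEquiv fun _ => Fin D).sum_comp F, Fintype.sum_prod_type]
  rfl

lemma cont_mulVec (Us : Fin (n+1) → Matrix (Fin D) (Fin D) ℂ)
    (φ : (Fin (n+1) → Fin D) → ℂ) (i : Fin D) :
    cont ((bigOp Us).mulVec φ) i
      = ∑ j, Us 0 i j • (bigOp fun k : Fin n => Us k.succ).mulVec (cont φ j) := by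
  funext g
  show ∑ f, bigOp Us (Fin.cons i g) f * φ f = _
  rw [sum_split (fun f => bigOp Us (Fin.cons i g) f * φ f)]
  simp only [Finset.sum_apply, Pi.smul_apply, smul_eq_mul]
  refine Finset.sum_congr rfl fun j _ => ?_
  show ∑ h, bigOp Us (Fin.cons i g) (Fin.cons j h) * φ (Fin.cons j h)
      = Us 0 i j * ∑ h, (bigOp fun k : Fin n => Us k.succ) g h * cont φ j h
  rw [Finset.mul_sum]
  refine Finset.sum_congr rfl fun h _ => ?_
  simp only [bigOp, Matrix.of_apply, cont]
  rw [Fin.prod_univ_succ]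
  simp [mul_assoc]

lemma cont_smul (c : ℂ) (φ : (Fin (n+1) → Fin D) → ℂ) (i : Fin D) :
    cont (c • φ) i = c • cont φ i := rfl

/-- orthogonality of the contractions of a unit-norm 1-uniform state -/
lemma cont_ortho (hD : 0 < D) (φ : (Fin (n+1) → Fin D) → ℂ)
    (hn : ∑ f : Fin (n + 1) → Fin D, (starRingEnd ℂ) (φ f) * φ f = 1)
    (hu : IsUniform 1 φ) (i j : Fin D) :
    ip (cont φ i) (cont φ j) = if i = j then ((D : ℂ))⁻¹ else 0 := by
  have hDc : (D : ℂ) ≠ 0 := Nat.cast_ne_zero.mpr hD.ne'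
  obtain ⟨c, hc⟩ := hu {0} (Finset.card_singleton 0)
  have sel : ∀ (a : Fin D) (f : Fin (n+1) → Fin D),
      (fun x => if x ∈ ({0} : Finset (Fin (n+1))) then (fun _ => a : Fin (n+1) → Fin D) x else f x)
        = Fin.cons a (Fin.tail f) := by
    intro a f
    funext x
    refine Fin.cases ?_ (fun k => ?_) x
    · simp
    · simp [Fin.succ_ne_zero, Fin.tail]
  have key : ∀ i j : Fin D, (D : ℂ) * ip (cont φ i) (cont φ j)
      = if i = j then c else 0 := by
    intro i j
    have h1 := hc (fun _ => j) (fun _ => i)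
    rw [red] at h1
    simp only [sel] at h1
    rw [sum_split (fun f => φ (Fin.cons j (Fin.tail f)) *
        (starRingEnd ℂ) (φ (Fin.cons i (Fin.tail f))))] at h1
    simp only [Fin.tail_cons] at h1
    rw [Finset.sum_const, Finset.card_univ, Fintype.card_fin, nsmul_eq_mul] at h1
    have h2 : (∀ x ∈ ({0} : Finset (Fin (n+1))), (fun _ => j : Fin (n+1) → Fin D) x
        = (fun _ => i : Fin (n+1) → Fin D) x) ↔ (i = j) := by
      simp [eq_comm]
    rw [if_congr h2 rfl rfl] at h1
    rw [← h1, ip, Finset.mul_sum, Finset.mul_sum]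
    exact Finset.sum_congr rfl fun h _ => by simp only [cont]; ring
  have hc1 : c = 1 := by
    have h3 : ∑ i : Fin D, ip (cont φ i) (cont φ i) = 1 := by
      rw [← hn, sum_split (fun f => (starRingEnd ℂ) (φ f) * φ f)]
      rfl
    have h4 : ∀ i : Fin D, ip (cont φ i) (cont φ i) = c / (D : ℂ) := by
      intro i
      have h5 := key i i
      rw [if_pos rfl] at h5
      rw [eq_div_iff hDc, mul_comm]
      exact h5
    rw [Finset.sum_congr rfl (fun i _ => h4 i), Finset.sum_const, Finset.card_univ,
      Fintype.card_fin, nsmul_eq_mul] at h3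
    rw [mul_comm, div_mul_cancel₀ c hDc] at h3
    exact h3
  have hkey := key i j
  rw [hc1] at hkey
  rcases eq_or_ne i j with h | h
  · rw [if_pos h] at hkey ⊢
    rw [inv_eq_one_div, eq_div_iff hDc, mul_comm]
    exact hkey
  · rw [if_neg h] at hkey ⊢
    exact (mul_eq_zero.mp hkey).resolve_left hDc

end S19

theorem stmt_19 {n D : ℕ} (hEven : Even (n + 1))
    (φ ψ : (Fin (n + 1) → Fin D) → ℂ)
    (hφn : ∑ f : Fin (n + 1) → Fin D, (starRingEnd ℂ) (φ f) * φ f = 1)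
    (hψn : ∑ f : Fin (n + 1) → Fin D, (starRingEnd ℂ) (ψ f) * ψ f = 1)
    (hφu : IsUniform 1 φ) (hψu : IsUniform 1 ψ) :
    (∀ (t : ℝ) (Us : Fin (n + 1) → Matrix (Fin D) (Fin D) ℂ),
        (∀ k, (Us k)ᴴ * Us k = 1 ∧ (Us k).det = 1) →
        ψ = Complex.exp (Complex.I * t) • (bigOp Us).mulVec φ →
        Submodule.span ℂ (Set.range (cont ψ)) =
          Submodule.map (bigOp fun k : Fin n => Us k.succ).mulVecLin
            (Submodule.span ℂ (Set.range (cont φ)))) ∧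
      (∀ Us : Fin n → Matrix (Fin D) (Fin D) ℂ,
        (∀ k, (Us k)ᴴ * Us k = 1) →
        Submodule.span ℂ (Set.range (cont φ)) =
          Submodule.map (bigOp Us).mulVecLin (Submodule.span ℂ (Set.range (cont ψ))) →
        ∃ U0 : Matrix (Fin D) (Fin D) ℂ, U0ᴴ * U0 = 1 ∧
          φ = (bigOp (Fin.cons U0 Us)).mulVec ψ) := by
  rcases Nat.eq_zero_or_pos D with hD0 | hD
  · exfalso
    subst hD0
    have hE : IsEmpty (Fin (n+1) → Fin 0) := ⟨fun f => (f 0).elim0⟩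
    rw [Finset.univ_eq_empty, Finset.sum_empty] at hφn
    exact one_ne_zero hφn.symm
  have hDc : (D : ℂ) ≠ 0 := Nat.cast_ne_zero.mpr hD.ne'
  constructor
  · -- Part (1)
    intro t Us hU hrel
    set c : ℂ := Complex.exp (Complex.I * t) with hcdef
    have hcne : c ≠ 0 := Complex.exp_ne_zero _
    set N : Matrix (Fin n → Fin D) (Fin n → Fin D) ℂ := bigOp fun k : Fin n => Us k.succ with hN
    have hUe : ∀ j k : Fin D,
        ∑ i, (starRingEnd ℂ) (Us 0 i j) * Us 0 i k = if j = k then 1 else 0 := by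
      intro j k
      have h := congrArg (fun X : Matrix (Fin D) (Fin D) ℂ => X j k) (hU 0).1
      simpa [Matrix.mul_apply, Matrix.conjTranspose_apply, Matrix.one_apply] using h
    have h1 : ∀ i, cont ψ i = c • ∑ j, Us 0 i j • N.mulVec (cont φ j) := by
      intro i
      rw [hrel, S19.cont_smul, S19.cont_mulVec]
    apply le_antisymm
    · rw [Submodule.span_le]
      rintro x ⟨i, rfl⟩
      have h2 : cont ψ i = N.mulVecLin (c • ∑ j, Us 0 i j • cont φ j) := by
        rw [h1, LinearMap.map_smul, map_sum]
        simp only [LinearMap.map_smul, Matrix.mulVecLin_apply]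
      rw [h2]
      exact Submodule.mem_map_of_mem (Submodule.smul_mem _ c (Submodule.sum_mem _ fun j _ =>
        Submodule.smul_mem _ _ (Submodule.subset_span ⟨j, rfl⟩)))
    · rw [Submodule.map_span, Submodule.span_le]
      rintro x ⟨y, ⟨j, rfl⟩, rfl⟩
      have h2 : ∑ i, (starRingEnd ℂ) (Us 0 i j) • cont ψ i = c • N.mulVec (cont φ j) := by
        funext g
        simp only [Finset.sum_apply, Pi.smul_apply, smul_eq_mul, h1]
        calc ∑ i, (starRingEnd ℂ) (Us 0 i j) * (c * ∑ k, Us 0 i k * N.mulVec (cont φ k) g)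
            = c * ∑ k, (∑ i, (starRingEnd ℂ) (Us 0 i j) * Us 0 i k) * N.mulVec (cont φ k) g := by
              rw [Finset.mul_sum]
              simp_rw [Finset.sum_mul, Finset.mul_sum]
              rw [Finset.sum_comm]
              exact Finset.sum_congr rfl fun i _ => Finset.sum_congr rfl fun k _ => by ring
          _ = c * N.mulVec (cont φ j) g := by
              simp_rw [hUe, ite_mul, one_mul, zero_mul]
              rw [Finset.sum_ite_eq]
              simp
      have h3 : N.mulVecLin (cont φ j) = c⁻¹ • ∑ i, (starRingEnd ℂ) (Us 0 i j) • cont ψ i := by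
        rw [h2, smul_smul, inv_mul_cancel₀ hcne, one_smul, Matrix.mulVecLin_apply]
      rw [h3]
      exact Submodule.smul_mem _ _ (Submodule.sum_mem _ fun i _ =>
        Submodule.smul_mem _ _ (Submodule.subset_span ⟨i, rfl⟩))
  · -- Part (2)
    intro Us hUs hsp
    set Ut : Matrix (Fin n → Fin D) (Fin n → Fin D) ℂ := bigOp Us with hUt
    have hUtu : Utᴴ * Ut = 1 := S19.bigOp_unitary hUs
    set e : Fin D → (Fin n → Fin D) → ℂ := fun j => Ut.mulVec (cont ψ j) with he
    have hee : ∀ j k, S19.ip (e j) (e k) = if j = k then ((D : ℂ))⁻¹ else 0 := by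
      intro j k
      rw [he]
      rw [S19.ip_mulVec hUtu, S19.cont_ortho hD ψ hψn hψu]
    have hff : ∀ i k, S19.ip (cont φ i) (cont φ k) = if i = k then ((D : ℂ))⁻¹ else 0 :=
      S19.cont_ortho hD φ hφn hφu
    have hmem : ∀ i, cont φ i ∈ Submodule.span ℂ (Set.range e) := by
      intro i
      have him : Submodule.map Ut.mulVecLin (Submodule.span ℂ (Set.range (cont ψ)))
          = Submodule.span ℂ (Set.range e) := by
        rw [Submodule.map_span, ← Set.range_comp]
        rfl
      rw [← him, ← hsp]
      exact Submodule.subset_span ⟨i, rfl⟩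
    set U0 : Matrix (Fin D) (Fin D) ℂ :=
      Matrix.of fun i j => (D : ℂ) * S19.ip (e j) (cont φ i) with hU0
    have hrep : ∀ i, cont φ i = ∑ j, U0 i j • e j := by
      intro i
      obtain ⟨cc, hcc⟩ := (Submodule.mem_span_range_iff_exists_fun ℂ).mp (hmem i)
      have hval : ∀ j, U0 i j = cc j := by
        intro j
        show (D : ℂ) * S19.ip (e j) (cont φ i) = cc j
        rw [← hcc, S19.ip_sum_smul_right]
        simp_rw [hee]
        rw [Finset.mul_sum]
        simp_rw [mul_ite, mul_zero]
        rw [Finset.sum_ite_eq]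
        simp [hDc]
        field_simp
      rw [← hcc]
      exact Finset.sum_congr rfl fun j _ => by rw [hval j]
    have h7 : ∀ i j, S19.ip (e j) (cont φ i) = U0 i j / (D : ℂ) := by
      intro i j
      show S19.ip (e j) (cont φ i) = (D : ℂ) * S19.ip (e j) (cont φ i) / (D : ℂ)
      field_simp
    have hU0u : U0 * U0ᴴ = 1 := by
      ext i k
      rw [Matrix.mul_apply, Matrix.one_apply]
      have h6 := hff k i
      rw [hrep k, S19.ip_sum_smul_left] at h6
      simp_rw [h7] at h6
      have h9 : ∑ j, U0 i j * (starRingEnd ℂ) (U0 k j) = if k = i then 1 else 0 := by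
        calc ∑ j, U0 i j * (starRingEnd ℂ) (U0 k j)
            = (D : ℂ) * ∑ j, (starRingEnd ℂ) (U0 k j) * (U0 i j / (D : ℂ)) := by
              rw [Finset.mul_sum]
              exact Finset.sum_congr rfl fun j _ => by field_simp
          _ = (D : ℂ) * (if k = i then ((D : ℂ))⁻¹ else 0) := by rw [h6]
          _ = if k = i then 1 else 0 := by
              rcases eq_or_ne k i with h | h
              · rw [if_pos h, if_pos h, mul_inv_cancel₀ hDc]
              · rw [if_neg h, if_neg h, mul_zero]
      simp_rw [Matrix.conjTranspose_apply, ← Complex.star_def] at h9 ⊢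
      rw [h9]
      simp [eq_comm]
    refine ⟨U0, mul_eq_one_comm.mp hU0u, ?_⟩
    funext f
    have hf : f = Fin.cons (f 0) (Fin.tail f) := (Fin.cons_self_tail f).symm
    rw [hf]
    have hcm := S19.cont_mulVec (Fin.cons U0 Us) ψ (f 0)
    simp only [Fin.cons_zero, Fin.cons_succ] at hcm
    have h10 : φ (Fin.cons (f 0) (Fin.tail f)) = cont φ (f 0) (Fin.tail f) := rfl
    have h11 : (bigOp (Fin.cons U0 Us)).mulVec ψ (Fin.cons (f 0) (Fin.tail f))
        = cont ((bigOp (Fin.cons U0 Us)).mulVec ψ) (f 0) (Fin.tail f) := rfl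
    rw [h10, hrep (f 0), h11, hcm]
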